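/- Assume that for every 2-dimensional poset P, if every subset of P of cardinality ℵ1 is the union of countably many chains, then P is the union of countably many chains. Then for every positive integer n and every n-dimensional poset P, if every subset of P of cardinality ℵ1 is the union of countably many chains, then P is the union of countably many chains. -/

import Mathlib

open Cardinal

universe u

/-- A poset is `n`-dimensional if its order relation is the intersection of `n`
linear orders on its underlying set. -/
def NDim (n : ℕ) (P : Type u) [PartialOrder P] : Prop :=
  ∃ le : Fin n → (P → P → Prop), (∀ i, IsLinearOrder P (le i)) ∧
    ∀ x y : P, x ≤ y ↔ ∀ i, le i x y

/-- A subset `Q` of a poset is the union of countably many chains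
(with respect to the induced order). -/
def CtblChainCover {P : Type u} [PartialOrder P] (Q : Set P) : Prop :=
  ∃ f : Q → ℕ, ∀ x y : Q, f x = f y → ((x : P) ≤ y ∨ (y : P) ≤ x)

/-- If chain-cover reflection holds for all 2-dimensional posets, then it holds for
all `n`-dimensional posets, for every positive integer `n`. -/
theorem aux_chain_refl
    (h2 : ∀ (P : Type u) [PartialOrder P], NDim 2 P →
      (∀ Q : Set P, #Q = aleph 1 → CtblChainCover Q) →
        CtblChainCover (Set.univ : Set P)) :
    ∀ (n : ℕ), ∀ (P : Type u) [PartialOrder P], NDim (n+1) P →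
      (∀ Q : Set P, #Q = aleph 1 → CtblChainCover Q) →
        CtblChainCover (Set.univ : Set P) := by
  intro n
  induction n with
  | zero =>
      intro P _ hdim _
      obtain ⟨le, hlin, hiff⟩ := hdim
      refine ⟨fun _ => 0, fun x y _ => ?_⟩
      rcases (hlin ⟨0, Nat.one_pos⟩).toTotal.total (x : P) (y : P) with h | h
      · exact Or.inl ((hiff _ _).2 fun i => by
          have hi : i = ⟨0, Nat.one_pos⟩ := Fin.ext (Nat.lt_one_iff.1 i.isLt)
          rw [hi]; exact h)
      · exact Or.inr ((hiff _ _).2 fun i => by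
          have hi : i = ⟨0, Nat.one_pos⟩ := Fin.ext (Nat.lt_one_iff.1 i.isLt)
          rw [hi]; exact h)
  | succ n ih =>
      intro P instP hdim hsmall
      obtain ⟨le, hlin, hiff⟩ := hdim
      have lrefl : ∀ j : Fin (n+2), ∀ x : P, le j x x :=
        fun j => (hlin j).toIsPartialOrder.toIsPreorder.toRefl.refl
      have ltrans : ∀ j : Fin (n+2), ∀ x y z : P, le j x y → le j y z → le j x z :=
        fun j => (hlin j).toIsPartialOrder.toIsPreorder.toIsTrans.trans
      have lantisymm : ∀ j : Fin (n+2), ∀ x y : P, le j x y → le j y x → x = y :=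
        fun j => (hlin j).toIsPartialOrder.toAntisymm.antisymm
      have ltotal : ∀ j : Fin (n+2), ∀ x y : P, le j x y ∨ le j y x :=
        fun j => (hlin j).toTotal.total
      set le' : P → P → Prop := fun x y => ∀ i : Fin (n+1), le i.succ x y with hle'
      have le'_refl : ∀ x, le' x x := fun x i => lrefl i.succ x
      have le'_trans : ∀ x y z, le' x y → le' y z → le' x z :=
        fun x y z hxy hyz i => ltrans i.succ _ _ _ (hxy i) (hyz i)
      have le'_antisymm : ∀ x y, le' x y → le' y x → x = y := fun x y hxy hyx =>
        lantisymm (⟨0, n.succ_pos⟩ : Fin (n+1)).succ x y (hxy _) (hyx _)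
      let P' : PartialOrder P :=
        { le := le'
          lt := fun a b => le' a b ∧ ¬ le' b a
          le_refl := le'_refl
          le_trans := le'_trans
          le_antisymm := le'_antisymm
          lt_iff_le_not_ge := fun _ _ => Iff.rfl }
      have hdim' : @NDim (n+1) P P' :=
        ⟨fun i => le i.succ, fun i => hlin i.succ, fun x y => Iff.rfl⟩
      have hsmall' : ∀ Q : Set P, #Q = aleph 1 → @CtblChainCover P P' Q := by
        intro Q hQ
        obtain ⟨f, hf⟩ := hsmall Q hQ
        exact ⟨f, fun x y h => (hf x y h).imp
          (fun hle i => (hiff _ _).1 hle i.succ)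
          (fun hle i => (hiff _ _).1 hle i.succ)⟩
      obtain ⟨g, hg⟩ := @ih P P' hdim' hsmall'
      have hg' : ∀ x y : (Set.univ : Set P), g x = g y → (le' x.1 y.1 ∨ le' y.1 x.1) := hg
      clear hg hdim' hsmall'
      clear P'
      let C : ℕ → Set P := fun k => {p | g ⟨p, Set.mem_univ p⟩ = k}
      have hck : ∀ k : ℕ, CtblChainCover (Set.univ : Set ↥(C k)) := by
        intro k
        have h0big : (0:ℕ) < n+2 := Nat.succ_pos _
        set r0 : ↥(C k) → ↥(C k) → Prop := fun a b => le ⟨0, h0big⟩ a.1 b.1 with hr0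
        set r1 : ↥(C k) → ↥(C k) → Prop := fun a b => le' a.1 b.1 with hr1
        have hlin0 : IsLinearOrder (↥(C k)) r0 :=
          { refl := fun a => lrefl _ a.1
            trans := fun a b c hab hbc => ltrans ⟨0, h0big⟩ a.1 b.1 c.1 hab hbc
            antisymm := fun a b hab hba => Subtype.ext (lantisymm ⟨0, h0big⟩ a.1 b.1 hab hba)
            total := fun a b => ltotal ⟨0, h0big⟩ a.1 b.1 }
        have hlin1 : IsLinearOrder (↥(C k)) r1 := by
          refine { refl := fun a => le'_refl a.1
                   trans := fun a b c hab hbc => le'_trans a.1 b.1 c.1 hab hbc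
                   antisymm := fun a b hab hba => Subtype.ext (le'_antisymm a.1 b.1 hab hba)
                   total := fun a b => ?_ }
          exact hg' ⟨a.1, Set.mem_univ _⟩ ⟨b.1, Set.mem_univ _⟩ (a.2.trans b.2.symm)
        refine h2 (↥(C k)) ⟨fun i => if (i : ℕ) = 0 then r0 else r1, fun i => ?_, fun a b => ?_⟩ ?_
        · show IsLinearOrder (↥(C k)) (if (i : ℕ) = 0 then r0 else r1)
          by_cases hi : (i : ℕ) = 0
          · rw [if_pos hi]; exact hlin0
          · rw [if_neg hi]; exact hlin1
        · constructor
          · intro hab i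
            have hab' : (a : P) ≤ b := Subtype.coe_le_coe.2 hab
            have hle : ∀ j, le j a.1 b.1 := (hiff a.1 b.1).1 hab'
            show (if (i : ℕ) = 0 then r0 else r1) a b
            by_cases hi : (i : ℕ) = 0
            · rw [if_pos hi]; exact hle ⟨0, h0big⟩
            · rw [if_neg hi]; exact fun j => hle j.succ
          · intro h
            refine Subtype.coe_le_coe.1 ((hiff a.1 b.1).2 ?_)
            intro i
            refine Fin.cases ?_ (fun j => ?_) i
            · have h0 : r0 a b := h ⟨0, two_pos⟩
              exact h0
            · have h1 : r1 a b := h ⟨1, one_lt_two⟩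
              exact h1 j
        · intro Q hQ
          have hcard : #(Subtype.val '' Q : Set P) = aleph 1 := by
            rw [Cardinal.mk_image_eq Subtype.val_injective, hQ]
          obtain ⟨f, hf⟩ := hsmall _ hcard
          refine ⟨fun x => f ⟨x.1.1, ⟨x.1, x.2, rfl⟩⟩, fun x y hxy => ?_⟩
          have h := hf ⟨x.1.1, ⟨x.1, x.2, rfl⟩⟩ ⟨y.1.1, ⟨y.1, y.2, rfl⟩⟩ hxy
          exact h.imp
            (fun hh => Subtype.coe_le_coe.1 (show (x.1 : P) ≤ (y.1 : P) from hh))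
            (fun hh => Subtype.coe_le_coe.1 (show (y.1 : P) ≤ (x.1 : P) from hh))
      choose gk hgk using hck
      let G : ℕ → P → ℕ := fun k p =>
        if hp : p ∈ C k then gk k ⟨⟨p, hp⟩, Set.mem_univ _⟩ else 0
      refine ⟨fun x => Nat.pair (g x) (G (g x) x.1), fun x y hxy => ?_⟩
      rw [Nat.pair_eq_pair] at hxy
      obtain ⟨h1, h2'⟩ := hxy
      rw [h1] at h2'
      have hx : (x : P) ∈ C (g y) := by
        show g ⟨x.1, Set.mem_univ _⟩ = g y
        rw [← h1]
      have hy : (y : P) ∈ C (g y) := rfl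
      simp only [G, dif_pos hx, dif_pos hy] at h2'
      have h := hgk (g y) ⟨⟨x.1, hx⟩, Set.mem_univ _⟩ ⟨⟨y.1, hy⟩, Set.mem_univ _⟩ h2'
      exact h.imp
        (fun hh => Subtype.coe_le_coe.2
          (show (⟨x.1, hx⟩ : ↥(C (g y))) ≤ ⟨y.1, hy⟩ from hh))
        (fun hh => Subtype.coe_le_coe.2
          (show (⟨y.1, hy⟩ : ↥(C (g y))) ≤ ⟨x.1, hx⟩ from hh))

theorem twoDim_to_finite_dim_chain_reflection
    (h2 : ∀ (P : Type u) [PartialOrder P], NDim 2 P →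
      (∀ Q : Set P, #Q = aleph 1 → CtblChainCover Q) →
        CtblChainCover (Set.univ : Set P)) :
    ∀ (n : ℕ), 0 < n → ∀ (P : Type u) [PartialOrder P], NDim n P →
      (∀ Q : Set P, #Q = aleph 1 → CtblChainCover Q) →
        CtblChainCover (Set.univ : Set P) := by
  intro n hn P _ hdim hsmall
  obtain ⟨m, rfl⟩ : ∃ m, n = m + 1 := ⟨n - 1, (Nat.succ_pred_eq_of_pos hn).symm⟩
  exact aux_chain_refl h2 m P hdim hsmall
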